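/- The total number of humps in all Motzkin paths of order n equals (1/2)·(∑_{j≥0} C(n,j)·C(n-j,j) − 1). -/

import Mathlib

inductive MStep | U | F | D
deriving DecidableEq

def IsMotzkin (w : List MStep) : Prop :=
  w.count MStep.U = w.count MStep.D ∧
    ∀ p, p <+: w → p.count MStep.D ≤ p.count MStep.U

/-- A hump starting at position `i`: a `U`, then `k ≥ 0` `F`s, then a `D`. -/
def IsHumpAt (w : List MStep) (i : ℕ) : Prop :=
  ∃ k, w[i]? = some MStep.U ∧ (∀ j < k, w[i + 1 + j]? = some MStep.F) ∧
    w[i + 1 + k]? = some MStep.D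

instance : Fintype MStep :=
  ⟨{MStep.U, MStep.F, MStep.D}, by intro x; cases x <;> simp⟩

namespace TotalHumps

open Finset List Finset.Nat

attribute [local instance] Classical.propDecidable

noncomputable section

def cU (w : List MStep) : ℕ := w.count MStep.U
def cD (w : List MStep) : ℕ := w.count MStep.D

/-- nonnegativity via takes -/
def NN (w : List MStep) : Prop := ∀ i, cD (w.take i) ≤ cU (w.take i)

lemma isMotzkin_iff {w : List MStep} : IsMotzkin w ↔ (cU w = cD w ∧ NN w) := by
  constructor
  · rintro ⟨h1, h2⟩
    exact ⟨h1, fun i => h2 _ (List.take_prefix i w)⟩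
  · rintro ⟨h1, h2⟩
    refine ⟨h1, fun p hp => ?_⟩
    have := h2 p.length
    rwa [← List.prefix_iff_eq_take.mp hp] at this

/-- the finset of all lists of length n -/
def LF (n : ℕ) : Finset (List MStep) :=
  (Finset.univ : Finset (Fin n → MStep)).image (fun f => List.ofFn f)

lemma mem_LF {n : ℕ} {w : List MStep} : w ∈ LF n ↔ w.length = n := by
  constructor
  · rintro h
    simp only [LF, Finset.mem_image] at h
    obtain ⟨f, _, rfl⟩ := h
    simp
  · rintro rfl
    simp only [LF, Finset.mem_image]
    exact ⟨w.get, Finset.mem_univ _, List.ofFn_get w⟩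

def Mz (n : ℕ) : Finset (List MStep) := (LF n).filter IsMotzkin
def Gr (n : ℕ) : Finset (List MStep) := (LF n).filter (fun w => cU w = cD w)

def m (n : ℕ) : ℕ := (Mz n).card
def t (n : ℕ) : ℕ := (Gr n).card

def HP (n : ℕ) : Finset (List MStep × ℕ) :=
  ((LF n) ×ˢ Finset.range n).filter (fun p => IsMotzkin p.1 ∧ IsHumpAt p.1 p.2)

def h (n : ℕ) : ℕ := (HP n).card

def c (r : ℕ) : ℕ := ∑ pq ∈ antidiagonal r, m pq.1 * t pq.2

@[simp] lemma cU_nil : cU [] = 0 := rfl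
@[simp] lemma cD_nil : cD [] = 0 := rfl
@[simp] lemma cU_append (v w : List MStep) : cU (v ++ w) = cU v + cU w :=
  List.count_append
@[simp] lemma cD_append (v w : List MStep) : cD (v ++ w) = cD v + cD w :=
  List.count_append
@[simp] lemma cU_cons (x : MStep) (w : List MStep) :
    cU (x :: w) = cU w + (if x = MStep.U then 1 else 0) := by
  simp [cU, List.count_cons]
@[simp] lemma cD_cons (x : MStep) (w : List MStep) :
    cD (x :: w) = cD w + (if x = MStep.D then 1 else 0) := by
  simp [cD, List.count_cons]
@[simp] lemma cU_replicateF (k : ℕ) : cU (List.replicate k MStep.F) = 0 := by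
  simp [cU, List.count_replicate]
@[simp] lemma cD_replicateF (k : ℕ) : cD (List.replicate k MStep.F) = 0 := by
  simp [cD, List.count_replicate]

lemma take_succ_eq {w : List MStep} {i : ℕ} (h : i < w.length) :
    w.take (i+1) = w.take i ++ [w[i]] := by
  rw [List.take_succ]; simp [List.getElem?_eq_getElem h]

lemma isHumpAt_lt {w : List MStep} {i : ℕ} (h : IsHumpAt w i) : i < w.length := by
  obtain ⟨k, h1, _, _⟩ := h
  exact (List.getElem?_eq_some_iff.mp h1).1

lemma isHumpAt_len {w : List MStep} {i : ℕ} (h : IsHumpAt w i) :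
    ∃ k, i + 1 + k < w.length := by
  obtain ⟨k, _, _, h3⟩ := h
  exact ⟨k, (List.getElem?_eq_some_iff.mp h3).1⟩

lemma isMotzkin_nil : IsMotzkin [] := by
  refine ⟨rfl, fun p hp => ?_⟩
  rw [List.prefix_nil.mp hp]; exact le_refl _

lemma isMotzkin_F : IsMotzkin [MStep.F] := by
  rw [isMotzkin_iff]
  refine ⟨by simp, fun i => ?_⟩
  cases i <;> simp

-- base values
lemma LF_zero : LF 0 = {[]} := by
  ext w; simp [mem_LF, List.length_eq_zero_iff]

lemma LF_one : LF 1 = {[MStep.U], [MStep.F], [MStep.D]} := by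
  ext w
  simp only [mem_LF, List.length_eq_one_iff, Finset.mem_insert, Finset.mem_singleton]
  constructor
  · rintro ⟨a, rfl⟩; cases a <;> simp
  · rintro (rfl | rfl | rfl) <;> exact ⟨_, rfl⟩

lemma m_zero : m 0 = 1 := by
  have : Mz 0 = {[]} := by
    rw [Mz, LF_zero]
    rw [Finset.filter_singleton, if_pos isMotzkin_nil]
  rw [m, this, Finset.card_singleton]

lemma t_zero : t 0 = 1 := by
  have : Gr 0 = {[]} := by
    rw [Gr, LF_zero]
    rw [Finset.filter_singleton, if_pos (by simp)]
  rw [t, this, Finset.card_singleton]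

lemma m_one : m 1 = 1 := by
  have : Mz 1 = {[MStep.F]} := by
    ext w
    simp only [Mz, Finset.mem_filter, LF_one, Finset.mem_insert, Finset.mem_singleton]
    constructor
    · rintro ⟨(rfl | rfl | rfl), hm⟩
      · exfalso; rw [isMotzkin_iff] at hm; simp at hm
      · rfl
      · exfalso; rw [isMotzkin_iff] at hm; simp at hm
    · rintro rfl; exact ⟨by simp, isMotzkin_F⟩
  rw [m, this, Finset.card_singleton]

lemma t_one : t 1 = 1 := by
  have : Gr 1 = {[MStep.F]} := by
    ext w
    simp only [Gr, Finset.mem_filter, LF_one, Finset.mem_insert, Finset.mem_singleton]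
    constructor
    · rintro ⟨(rfl | rfl | rfl), hm⟩ <;> simp_all
    · rintro rfl; exact ⟨by simp, by simp⟩
  rw [t, this, Finset.card_singleton]

lemma h_zero : h 0 = 0 := by
  simp [h, HP]

lemma h_one : h 1 = 0 := by
  have : HP 1 = ∅ := by
    ext p
    simp only [HP, Finset.mem_filter, Finset.mem_product, mem_LF, Finset.mem_range,
      Finset.notMem_empty, iff_false, not_and]
    rintro ⟨hlen, _⟩ _ ⟨k, h1, h2, h3⟩
    have := (List.getElem?_eq_some_iff.mp h3).1
    omega
  rw [h, this, Finset.card_empty]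

/-! ### NN machinery -/

lemma nn_whole {A : List MStep} (h : NN A) : cD A ≤ cU A := by
  simpa using h A.length

lemma NN_append {A B : List MStep} :
    NN (A ++ B) ↔ NN A ∧ ∀ i, cD A + cD (B.take i) ≤ cU A + cU (B.take i) := by
  constructor
  · intro h
    constructor
    · intro i
      have := h (min i A.length)
      rwa [List.take_append, Nat.sub_eq_zero_of_le (min_le_right _ _),
        List.take_zero, List.append_nil, ← List.take_take, List.take_length] at this
    · intro i
      have := h (A.length + i)
      rwa [List.take_append, List.take_of_length_le (by omega),
        Nat.add_sub_cancel_left, cD_append, cU_append] at this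
  · rintro ⟨h1, h2⟩ i
    rw [List.take_append, cD_append, cU_append]
    rcases le_or_gt i A.length with hle | hlt
    · rw [Nat.sub_eq_zero_of_le hle, List.take_zero]
      simpa using h1 i
    · rw [List.take_of_length_le (by omega)]
      exact h2 (i - A.length)

lemma NN_appendUF {A : List MStep} {k : ℕ} :
    NN (A ++ MStep.U :: List.replicate k MStep.F) ↔ NN A := by
  rw [NN_append]
  constructor
  · exact fun h => h.1
  · intro h
    refine ⟨h, fun i => ?_⟩
    have h0 : cD ((MStep.U :: List.replicate k MStep.F).take i) = 0 := by
      have hle := (List.take_sublist i (MStep.U :: List.replicate k MStep.F)).count_le MStep.D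
      have h1 : (MStep.U :: List.replicate k MStep.F).count MStep.D = 0 := by
        simp [List.count_cons, List.count_replicate]
      simp only [cD]
      omega
    have := nn_whole h
    omega

lemma NN_hump {A B : List MStep} {k : ℕ} :
    NN (A ++ MStep.U :: (List.replicate k MStep.F ++ MStep.D :: B)) ↔ NN (A ++ B) := by
  have e : A ++ MStep.U :: (List.replicate k MStep.F ++ MStep.D :: B)
      = (A ++ MStep.U :: List.replicate k MStep.F) ++ (MStep.D :: B) := by simp
  rw [e, NN_append, NN_appendUF, NN_append]
  constructor
  · rintro ⟨h1, h2⟩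
    refine ⟨h1, fun i => ?_⟩
    have := h2 (i + 1)
    simp only [List.take_succ_cons, cD_cons, cU_cons, cD_append, cU_append,
      cU_replicateF, cD_replicateF] at this
    simp only [reduceCtorEq, if_true, if_false] at this
    omega
  · rintro ⟨h1, h2⟩
    refine ⟨h1, fun i => ?_⟩
    rcases i with _ | i
    · have := nn_whole h1; simp; omega
    · have := h2 i
      simp only [List.take_succ_cons, cD_cons, cU_cons, cD_append, cU_append,
        cU_replicateF, cD_replicateF]
      simp only [reduceCtorEq, if_true, if_false]
      omega

lemma motzkin_hump_iff {A B : List MStep} {k : ℕ} :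
    IsMotzkin (A ++ MStep.U :: (List.replicate k MStep.F ++ MStep.D :: B))
      ↔ IsMotzkin (A ++ B) := by
  rw [isMotzkin_iff, isMotzkin_iff]
  constructor
  · rintro ⟨h1, h2⟩
    refine ⟨?_, NN_hump.mp h2⟩
    simp only [cU_append, cD_append, cU_cons, cD_cons, cU_replicateF, cD_replicateF] at h1 ⊢
    simp only [reduceCtorEq, if_true, if_false] at h1
    omega
  · rintro ⟨h1, h2⟩
    refine ⟨?_, NN_hump.mpr h2⟩
    simp only [cU_append, cD_append, cU_cons, cD_cons, cU_replicateF, cD_replicateF] at h1 ⊢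
    simp only [reduceCtorEq, if_true, if_false]
    omega

lemma motzkin_cons_F {w : List MStep} : IsMotzkin (MStep.F :: w) ↔ IsMotzkin w := by
  rw [isMotzkin_iff, isMotzkin_iff]
  refine and_congr (by simp) ?_
  unfold NN
  constructor
  · intro h i
    have := h (i + 1)
    simpa using this
  · intro h i
    cases i with
    | zero => simp
    | succ j => have := h j; simpa using this

lemma motzkin_build {P Q : List MStep} (hP : IsMotzkin P) (hQ : IsMotzkin Q) :
    IsMotzkin (MStep.U :: (P ++ MStep.D :: Q)) := by
  rw [isMotzkin_iff] at hP hQ ⊢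
  obtain ⟨hPb, hPn⟩ := hP
  obtain ⟨hQb, hQn⟩ := hQ
  constructor
  · simp; omega
  · rw [show (MStep.U :: (P ++ MStep.D :: Q) : List MStep) = [MStep.U] ++ (P ++ MStep.D :: Q)
      from rfl, NN_append]
    refine ⟨fun i => by cases i <;> simp, fun i => ?_⟩
    rw [List.take_append, cD_append, cU_append]
    rcases le_or_gt i P.length with hle | hlt
    · rw [Nat.sub_eq_zero_of_le hle, List.take_zero]
      have := hPn i
      simp; omega
    · rw [List.take_of_length_le (by omega)]
      rcases (i - P.length) with _ | j
      · have := hPn P.length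
        simp at this ⊢; omega
      · rw [List.take_succ_cons]
        have := hQn j
        have := hPn P.length
        simp at this ⊢
        simp_all
        omega

/-! ### counts along takes -/

lemma counts_take_succ (w : List MStep) (i : ℕ) :
    cD (w.take i) ≤ cD (w.take (i+1)) ∧ cD (w.take (i+1)) ≤ cD (w.take i) + 1 ∧
    cU (w.take i) ≤ cU (w.take (i+1)) ∧ cU (w.take (i+1)) ≤ cU (w.take i) + 1 ∧
    cU (w.take (i+1)) + cD (w.take (i+1)) ≤ cU (w.take i) + cD (w.take i) + 1 := by
  rcases lt_or_ge i w.length with hlt | hge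
  · rw [take_succ_eq hlt]
    cases w[i] <;> simp <;> omega
  · rw [List.take_of_length_le hge, List.take_of_length_le (by omega)]
    omega

/-! ### the split lemma -/

lemma split_lemma (v : List MStep) (hbal : cD v = cU v + 1) :
    ∃ P Q, v = P ++ MStep.D :: Q ∧ IsMotzkin P ∧ cU Q = cD Q ∧
      ((∀ i, cD (v.take i) ≤ cU (v.take i) + 1) → NN Q) := by
  have hex : ∃ n, cD (v.take n) = cU (v.take n) + 1 := ⟨v.length, by simpa using hbal⟩
  set N := Nat.find hex with hNdef
  have hN : cD (v.take N) = cU (v.take N) + 1 := Nat.find_spec hex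
  have hmin : ∀ j, j < N → cD (v.take j) ≠ cU (v.take j) + 1 := fun j hj => Nat.find_min hex hj
  have hN1 : 1 ≤ N := by
    rcases Nat.eq_zero_or_pos N with h0 | h; · rw [h0] at hN; simp at hN
    exact h
  have hNlen : N ≤ v.length := Nat.find_min' hex (by simpa using hbal)
  have hclaim : ∀ j, j < N → cD (v.take j) ≤ cU (v.take j) := by
    intro j hj
    induction j with
    | zero => simp
    | succ i ih =>
      have hi := ih (by omega)
      have hs := counts_take_succ v i
      have hne := hmin (i+1) hj
      omega
  have hi : N - 1 < v.length := by omega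
  have htk : v.take N = v.take (N-1) ++ [v[N-1]] := by
    have := take_succ_eq hi
    rwa [Nat.sub_add_cancel hN1] at this
  have hprev := hclaim (N-1) (by omega)
  rw [htk] at hN
  have hx1 : v[N-1]'hi = MStep.D := by
    cases h : v[N-1]'hi
    · exfalso; rw [h] at hN; simp at hN; omega
    · exfalso; rw [h] at hN; simp at hN; omega
    · rfl
  rw [hx1] at hN htk
  have hx2 : cD (v.take (N-1)) = cU (v.take (N-1)) := by
    simp at hN; omega
  refine ⟨v.take (N-1), v.drop N, ?_, ?_, ?_, ?_⟩
  · conv_lhs => rw [← List.take_append_drop N v]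
    rw [htk, List.append_assoc, List.singleton_append]
  · rw [isMotzkin_iff]
    refine ⟨hx2.symm, fun j => ?_⟩
    rw [List.take_take]
    exact hclaim (min j (N - 1)) (by omega)
  · have e := List.take_append_drop N v
    have h2 : cU (v.take N) + cU (v.drop N) = cU v := by
      conv_rhs => rw [← e]; rw [cU_append]
    have h3 : cD (v.take N) + cD (v.drop N) = cD v := by
      conv_rhs => rw [← e]; rw [cD_append]
    rw [htk] at h2 h3
    simp at h2 h3
    omega
  · intro hyp i
    have := hyp (N + i)
    rw [List.take_add, htk] at this
    simp at this
    omega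

lemma split_aux {P Q P' Q' : List MStep} (hPb : cU P = cD P) (hP' : IsMotzkin P')
    (he : P ++ MStep.D :: Q = P' ++ MStep.D :: Q') (hl : P.length < P'.length) : False := by
  have h1 : (P ++ MStep.D :: Q).take (P.length + 1) = P ++ [MStep.D] := by
    rw [List.take_append, List.take_of_length_le (by omega),
      Nat.add_sub_cancel_left, List.take_succ_cons, List.take_zero]
  have h2 : (P' ++ MStep.D :: Q').take (P.length + 1) = P'.take (P.length + 1) := by
    rw [List.take_append, Nat.sub_eq_zero_of_le (by omega), List.take_zero,
      List.append_nil]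
  rw [isMotzkin_iff] at hP'
  have h3 := hP'.2 (P.length + 1)
  rw [← h2, ← he, h1] at h3
  simp at h3
  omega

lemma split_unique {P Q P' Q' : List MStep} (hP : IsMotzkin P) (hP' : IsMotzkin P')
    (he : P ++ MStep.D :: Q = P' ++ MStep.D :: Q') : P = P' ∧ Q = Q' := by
  have hlen : P.length = P'.length := by
    rcases lt_trichotomy P.length P'.length with h | h | h
    · exact absurd (split_aux (isMotzkin_iff.mp hP).1 hP' he h) not_false
    · exact h
    · exact absurd (split_aux (isMotzkin_iff.mp hP').1 hP he.symm h) not_false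
  obtain ⟨h1, h2⟩ := List.append_inj he hlen
  exact ⟨h1, by injection h2⟩

lemma motzkin_U_decomp {w : List MStep} (h : IsMotzkin (MStep.U :: w)) :
    ∃ P Q, w = P ++ MStep.D :: Q ∧ IsMotzkin P ∧ IsMotzkin Q := by
  rw [isMotzkin_iff] at h
  obtain ⟨hb, hn⟩ := h
  have hbal : cD w = cU w + 1 := by simp at hb; omega
  have hextra : ∀ i, cD (w.take i) ≤ cU (w.take i) + 1 := by
    intro i
    have := hn (i + 1)
    simpa using this
  obtain ⟨P, Q, he, hP, hQb, hQn⟩ := split_lemma w hbal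
  refine ⟨P, Q, he, hP, isMotzkin_iff.mpr ⟨hQb, hQn hextra⟩⟩

lemma not_motzkin_D {w : List MStep} (h : IsMotzkin (MStep.D :: w)) : False := by
  rw [isMotzkin_iff] at h
  have := h.2 1
  simp at this

lemma mem_Mz {n : ℕ} {w : List MStep} : w ∈ Mz n ↔ w.length = n ∧ IsMotzkin w := by
  simp [Mz, Finset.mem_filter, mem_LF]

lemma mem_Gr {n : ℕ} {w : List MStep} : w ∈ Gr n ↔ w.length = n ∧ cU w = cD w := by
  simp [Gr, Finset.mem_filter, mem_LF]

-- (R1)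
lemma m_rec (n : ℕ) : m (n + 2) = m (n + 1) + ∑ ij ∈ antidiagonal n, m ij.1 * m ij.2 := by
  classical
  have hcard : ((Mz (n+1)).disjSum
      ((antidiagonal n).sigma (fun ij => Mz ij.1 ×ˢ Mz ij.2))).card = (Mz (n+2)).card := by
    apply Finset.card_nbij
      (i := Sum.elim (fun w => MStep.F :: w) (fun x => MStep.U :: (x.2.1 ++ MStep.D :: x.2.2)))
    · rintro (w | ⟨⟨i, j⟩, P, Q⟩) hmem
      · rw [Finset.mem_coe, Finset.inl_mem_disjSum, mem_Mz] at hmem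
        rw [Finset.mem_coe, mem_Mz]
        exact ⟨by simp [hmem.1], motzkin_cons_F.mpr hmem.2⟩
      · rw [Finset.mem_coe, Finset.inr_mem_disjSum, Finset.mem_sigma, Finset.mem_product] at hmem
        obtain ⟨hij, hP, hQ⟩ := hmem
        dsimp only at hij hP hQ
        rw [Finset.HasAntidiagonal.mem_antidiagonal] at hij
        rw [mem_Mz] at hP hQ
        rw [Finset.mem_coe, mem_Mz]
        constructor
        · obtain ⟨hP1, _⟩ := hP
          obtain ⟨hQ1, _⟩ := hQ
          simp
          omega
        · exact motzkin_build hP.2 hQ.2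
    · rintro (w | ⟨⟨i, j⟩, P, Q⟩) h1 (w' | ⟨⟨i', j'⟩, P', Q'⟩) h2 he
      · simp only [Sum.elim_inl, List.cons.injEq] at he
        rw [he.2]
      · simp only [Sum.elim_inl, Sum.elim_inr, List.cons.injEq] at he
        exact absurd he.1 (by simp)
      · simp only [Sum.elim_inl, Sum.elim_inr, List.cons.injEq] at he
        exact absurd he.1 (by simp)
      · simp only [Sum.elim_inr, List.cons.injEq] at he
        simp only [Finset.mem_coe, Finset.inr_mem_disjSum, Finset.mem_sigma,
          Finset.mem_product] at h1 h2
        obtain ⟨_, hP, hQ⟩ := h1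
        obtain ⟨_, hP', hQ'⟩ := h2
        rw [mem_Mz] at hP hQ hP' hQ'
        obtain ⟨hPP, hQQ⟩ := split_unique hP.2 hP'.2 he.2
        subst hPP; subst hQQ
        have : i = i' := by rw [← hP.1, ← hP'.1]
        have : j = j' := by rw [← hQ.1, ← hQ'.1]
        subst_vars
        rfl
    · intro w hw
      rw [Finset.mem_coe, mem_Mz] at hw
      obtain ⟨hlen, hmz⟩ := hw
      rw [Set.mem_image]
      match w with
      | [] => simp at hlen
      | MStep.F :: w' =>
        refine ⟨Sum.inl w', ?_, rfl⟩
        rw [Finset.mem_coe, Finset.inl_mem_disjSum, mem_Mz]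
        exact ⟨by simpa using hlen, motzkin_cons_F.mp hmz⟩
      | MStep.D :: w' => exact absurd hmz (fun h => not_motzkin_D h)
      | MStep.U :: w' =>
        obtain ⟨P, Q, hsplit, hP, hQ⟩ := motzkin_U_decomp hmz
        refine ⟨Sum.inr ⟨(P.length, Q.length), (P, Q)⟩, ?_, by simp [hsplit]⟩
        rw [Finset.mem_coe, Finset.inr_mem_disjSum, Finset.mem_sigma, Finset.mem_product,
          Finset.HasAntidiagonal.mem_antidiagonal]
        refine ⟨?_, by rw [mem_Mz]; exact ⟨rfl, hP⟩, by rw [mem_Mz]; exact ⟨rfl, hQ⟩⟩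
        have hl2 : w'.length = n + 1 := by simpa using hlen
        rw [hsplit] at hl2
        simp at hl2
        dsimp only
        omega
  rw [m, m, ← hcard, Finset.card_disjSum, Finset.card_sigma]
  congr 1
  apply Finset.sum_congr rfl
  intro ij _
  rw [Finset.card_product]
  rfl

/-- insert a hump `U F^k D` at position `s` -/
def ins (C : List MStep) (s k : ℕ) : List MStep :=
  C.take s ++ MStep.U :: (List.replicate k MStep.F ++ MStep.D :: C.drop s)

lemma ins_length {C : List MStep} {s k : ℕ} : (ins C s k).length = C.length + k + 2 := by
  simp [ins]
  omega

lemma ins_motzkin {C : List MStep} {s k : ℕ} (hC : IsMotzkin C) : IsMotzkin (ins C s k) := by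
  rw [ins, motzkin_hump_iff, List.take_append_drop]
  exact hC

lemma ins_hump {C : List MStep} {s k : ℕ} (hs : s ≤ C.length) : IsHumpAt (ins C s k) s := by
  have hlt : (C.take s).length = s := by simp [hs]
  refine ⟨k, ?_, ?_, ?_⟩
  · rw [ins, List.getElem?_append_right (by omega), hlt, Nat.sub_self]
    simp
  · intro j hj
    rw [ins, List.getElem?_append_right (by omega), hlt]
    have he : s + 1 + j - s = j + 1 := by omega
    rw [he, List.getElem?_cons_succ, List.getElem?_append, if_pos (by simpa using hj),
      List.getElem?_replicate, if_pos hj]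
  · rw [ins, List.getElem?_append_right (by omega), hlt]
    have he : s + 1 + k - s = k + 1 := by omega
    rw [he, List.getElem?_cons_succ, List.getElem?_append, if_neg (by simp),
      List.length_replicate, Nat.sub_self]
    simp

lemma repD_unique : ∀ (k : ℕ) {k' : ℕ} {B B' : List MStep},
    List.replicate k MStep.F ++ MStep.D :: B = List.replicate k' MStep.F ++ MStep.D :: B' →
    k = k' ∧ B = B' := by
  intro k
  induction k with
  | zero =>
    intro k' B B' he
    cases k' with
    | zero =>
      simp only [List.replicate_zero, List.nil_append, List.cons.injEq, true_and] at he
      exact ⟨rfl, he⟩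
    | succ j =>
      rw [List.replicate_succ] at he
      simp only [List.replicate_zero, List.nil_append, List.cons_append, List.cons.injEq] at he
      exact absurd he.1 (by simp)
  | succ i ih =>
    intro k' B B' he
    cases k' with
    | zero =>
      rw [List.replicate_succ] at he
      simp only [List.replicate_zero, List.nil_append, List.cons_append, List.cons.injEq] at he
      exact absurd he.1 (by simp)
    | succ j =>
      simp only [List.replicate_succ, List.cons_append, List.cons.injEq, true_and] at he
      obtain ⟨h1, h2⟩ := ih he
      exact ⟨by omega, h2⟩

lemma hump_decomp {w : List MStep} {i k : ℕ} (h1 : w[i]? = some MStep.U)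
    (h2 : ∀ j < k, w[i + 1 + j]? = some MStep.F) (h3 : w[i + 1 + k]? = some MStep.D) :
    w = ins (w.take i ++ w.drop (i + k + 2)) i k ∧ i ≤ (w.take i).length := by
  obtain ⟨hi, hvi⟩ := List.getElem?_eq_some_iff.mp h1
  obtain ⟨hik, hvik⟩ := List.getElem?_eq_some_iff.mp h3
  have hdropi : w.drop i = MStep.U :: w.drop (i + 1) := by
    rw [List.drop_eq_getElem_cons hi, hvi]
  have hflat : ∀ m, m ≤ k → w.drop (i + 1) = List.replicate m MStep.F ++ w.drop (i + 1 + m) := by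
    intro m
    induction m with
    | zero => simp
    | succ a ihm =>
      intro ha
      obtain ⟨hia, hvia⟩ := List.getElem?_eq_some_iff.mp (h2 a (by omega))
      rw [ihm (by omega), List.replicate_succ']
      rw [List.drop_eq_getElem_cons hia, hvia, List.append_assoc, List.singleton_append]
      congr 2 <;> omega
  have hdropk : w.drop (i + 1 + k) = MStep.D :: w.drop (i + k + 2) := by
    rw [List.drop_eq_getElem_cons hik, hvik]
    congr 2 <;> omega
  have htl : (w.take i).length = i := by simp; omega
  have hdd : List.drop i (w.take i ++ w.drop (i + k + 2)) = w.drop (i + k + 2) := by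
    rw [List.drop_append, htl, Nat.sub_self, List.drop_zero,
      List.drop_eq_nil_of_le (by omega), List.nil_append]
  have hrhs : ins (w.take i ++ w.drop (i + k + 2)) i k
      = w.take i ++ (MStep.U :: (List.replicate k MStep.F ++ MStep.D :: w.drop (i + k + 2))) := by
    rw [ins, hdd, List.take_append, htl, Nat.sub_self, List.take_zero,
      List.append_nil, List.take_take, min_self]
  constructor
  · rw [hrhs]
    conv_lhs => rw [← List.take_append_drop i w]
    congr 1
    rw [hdropi, hflat k (le_refl k), hdropk]
  · omega

-- (B1)
lemma h_rec (n : ℕ) : h (n + 2) = ∑ l ∈ Finset.range (n + 1), (l + 1) * m l := by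
  classical
  have hcard : ((Finset.range (n + 1)).sigma
      (fun l => Mz l ×ˢ Finset.range (l + 1))).card = (HP (n + 2)).card := by
    apply Finset.card_nbij (i := fun x => (ins x.2.1 x.2.2 (n - x.1), x.2.2))
    · rintro ⟨l, C, s⟩ hmem
      rw [Finset.mem_coe, Finset.mem_sigma, Finset.mem_product] at hmem
      obtain ⟨hl, hC, hs⟩ := hmem
      dsimp only at hl hC hs ⊢
      rw [Finset.mem_range] at hl hs
      rw [mem_Mz] at hC
      rw [Finset.mem_coe, HP, Finset.mem_filter, Finset.mem_product, mem_LF, Finset.mem_range]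
      have hsl : s ≤ C.length := by omega
      refine ⟨⟨?_, ?_⟩, ins_motzkin hC.2, ins_hump hsl⟩
      · show (ins C s (n - l)).length = n + 2
        rw [ins_length, hC.1]; omega
      · show s < n + 2
        omega
    · rintro ⟨l, C, s⟩ hm1 ⟨l', C', s'⟩ hm2 he
      simp only [Finset.mem_coe, Finset.mem_sigma, Finset.mem_product, Finset.mem_range] at hm1 hm2
      obtain ⟨hl, hC, hs⟩ := hm1
      obtain ⟨hl', hC', hs'⟩ := hm2
      dsimp only at *
      rw [mem_Mz] at hC hC'
      obtain ⟨hss, hw⟩ : s = s' ∧ ins C s (n - l) = ins C' s' (n - l') := by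
        have h1 := congrArg Prod.fst he
        have h2 := congrArg Prod.snd he
        exact ⟨h2, h1⟩
      subst hss
      rw [ins, ins] at hw
      have htl : (C.take s).length = (C'.take s).length := by
        simp; omega
      obtain ⟨hw1, hw2⟩ := List.append_inj hw htl
      simp only [List.cons.injEq, true_and] at hw2
      obtain ⟨hk, hrest⟩ := repD_unique (n - l) hw2
      have hCC : C = C' := by
        conv_lhs => rw [← List.take_append_drop s C]
        conv_rhs => rw [← List.take_append_drop s C']
        rw [hw1, hrest]
      subst hCC
      have : l = l' := by omega
      subst this
      rfl
    · rintro ⟨w, s⟩ hw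
      rw [Finset.mem_coe, HP, Finset.mem_filter, Finset.mem_product, mem_LF,
        Finset.mem_range] at hw
      obtain ⟨⟨hlen, hsn⟩, hmz, hhump⟩ := hw
      dsimp only at hlen hsn hmz hhump
      obtain ⟨k, h1, h2, h3⟩ := hhump
      obtain ⟨hik, _⟩ := List.getElem?_eq_some_iff.mp h3
      obtain ⟨hdec, _⟩ := hump_decomp h1 h2 h3
      set C := w.take s ++ w.drop (s + k + 2) with hCdef
      have hCl : C.length = n - k := by
        rw [hCdef, List.length_append, List.length_take, List.length_drop]
        omega
      have hkn : k ≤ n := by omega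
      have hins : IsMotzkin (ins C s k) := hdec ▸ hmz
      have hCmz : IsMotzkin C := by
        rw [ins, motzkin_hump_iff, List.take_append_drop] at hins
        exact hins
      rw [Set.mem_image]
      refine ⟨⟨n - k, C, s⟩, ?_, ?_⟩
      · rw [Finset.mem_coe, Finset.mem_sigma, Finset.mem_product]
        refine ⟨?_, ?_, ?_⟩
        · show n - k ∈ Finset.range (n + 1)
          rw [Finset.mem_range]; omega
        · show C ∈ Mz (n - k)
          rw [mem_Mz]
          exact ⟨hCl, hCmz⟩
        · show s ∈ Finset.range (n - k + 1)
          rw [Finset.mem_range]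
          omega
      · show (ins C s (n - (n - k)), s) = (w, s)
        have hnk : n - (n - k) = k := by omega
        rw [hnk, ← hdec]
  rw [h, ← hcard, Finset.card_sigma]
  refine Finset.sum_congr rfl fun l _ => ?_
  rw [Finset.card_product, Finset.card_range]
  rw [m]
  ring

/-! ### swap involution and grand decomposition -/

def swp : MStep → MStep
  | MStep.U => MStep.D
  | MStep.D => MStep.U
  | MStep.F => MStep.F

def sg (w : List MStep) : List MStep := w.map swp

@[simp] lemma sg_sg (w : List MStep) : sg (sg w) = w := by
  rw [sg, sg, List.map_map]
  have : swp ∘ swp = id := by funext x; cases x <;> rfl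
  rw [this, List.map_id]

@[simp] lemma sg_length (w : List MStep) : (sg w).length = w.length := by simp [sg]

@[simp] lemma cU_sg (w : List MStep) : cU (sg w) = cD w := by
  induction w with
  | nil => rfl
  | cons x v ih =>
    rw [sg, List.map_cons, ← sg]
    cases x <;> simp [swp, ih]

@[simp] lemma cD_sg (w : List MStep) : cD (sg w) = cU w := by
  induction w with
  | nil => rfl
  | cons x v ih =>
    rw [sg, List.map_cons, ← sg]
    cases x <;> simp [swp, ih]

lemma strip (w : List MStep) :
    (∀ x ∈ w, x = MStep.F) ∨ ∃ j x v, x ≠ MStep.F ∧ w = List.replicate j MStep.F ++ x :: v := by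
  induction w with
  | nil => left; simp
  | cons y v ih =>
    by_cases hy : y = MStep.F
    · subst hy
      rcases ih with hall | ⟨j, x, u, hx, he⟩
      · left
        intro x hx
        rcases List.mem_cons.mp hx with rfl | hmem
        · rfl
        · exact hall x hmem
      · right
        exact ⟨j + 1, x, u, hx, by rw [List.replicate_succ, List.cons_append, he]⟩
    · right
      exact ⟨0, y, v, hy, by simp⟩

lemma lead_unique : ∀ (j : ℕ) {j' : ℕ} {x x' : MStep} {v v' : List MStep},
    x ≠ MStep.F → x' ≠ MStep.F →
    List.replicate j MStep.F ++ x :: v = List.replicate j' MStep.F ++ x' :: v' →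
    j = j' ∧ x = x' ∧ v = v' := by
  intro j
  induction j with
  | zero =>
    intro j' x x' v v' hx hx' he
    cases j' with
    | zero =>
      simp only [List.replicate_zero, List.nil_append, List.cons.injEq] at he
      exact ⟨rfl, he.1, he.2⟩
    | succ i =>
      rw [List.replicate_succ] at he
      simp only [List.replicate_zero, List.nil_append, List.cons_append,
        List.cons.injEq] at he
      exact absurd he.1 hx
  | succ i ih =>
    intro j' x x' v v' hx hx' he
    cases j' with
    | zero =>
      rw [List.replicate_succ] at he
      simp only [List.replicate_zero, List.nil_append, List.cons_append,
        List.cons.injEq] at he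
      exact absurd he.1.symm hx'
    | succ i' =>
      rw [List.replicate_succ, List.replicate_succ] at he
      simp only [List.cons_append, List.cons.injEq, true_and] at he
      obtain ⟨h1, h2, h3⟩ := ih hx hx' he
      exact ⟨by omega, h2, h3⟩

/-- builder for the grand decomposition -/
def bld (x : (_ : ℕ × ℕ) × (_ : ℕ × ℕ) × List MStep × List MStep) : List MStep :=
  List.replicate x.1.1 MStep.F ++ MStep.U :: (x.2.2.1 ++ MStep.D :: x.2.2.2)

lemma sg_bld (x : (_ : ℕ × ℕ) × (_ : ℕ × ℕ) × List MStep × List MStep) :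
    sg (bld x) = List.replicate x.1.1 MStep.F ++
      MStep.D :: (sg x.2.2.1 ++ MStep.U :: sg x.2.2.2) := by
  rw [bld, sg, List.map_append, List.map_replicate, List.map_cons, List.map_append,
    List.map_cons]
  rfl

-- (B2 + involution)
lemma t_rec (n : ℕ) : t (n + 2) = 1 + 2 * ∑ r ∈ Finset.range (n + 1), c r := by
  classical
  set TT := (antidiagonal n).sigma
    (fun jr => (antidiagonal jr.2).sigma (fun pq => Mz pq.1 ×ˢ Gr pq.2)) with hTT
  have hmemb : ∀ x ∈ TT, bld x ∈ Gr (n + 2) ∧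
      x.1.1 + 1 + x.2.2.1.length + 1 + x.2.2.2.length = n + 2 ∧
      x.2.2.1.length = x.2.1.1 ∧ IsMotzkin x.2.2.1 ∧ cU x.2.2.2 = cD x.2.2.2 := by
    rintro ⟨⟨j, r⟩, ⟨p, q⟩, P, Q⟩ hx
    rw [hTT, Finset.mem_sigma, Finset.mem_sigma, Finset.mem_product] at hx
    obtain ⟨hjr, hpq, hP, hQ⟩ := hx
    rw [Finset.HasAntidiagonal.mem_antidiagonal] at hjr hpq
    rw [mem_Mz] at hP
    rw [mem_Gr] at hQ
    dsimp only at *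
    have hPb := (isMotzkin_iff.mp hP.2).1
    refine ⟨?_, by omega, hP.1, hP.2, hQ.2⟩
    rw [mem_Gr, bld]
    constructor
    · simp only [List.length_append, List.length_replicate, List.length_cons]
      omega
    · simp only [cU_append, cD_append, cU_cons, cD_cons, cU_replicateF, cD_replicateF]
      simp only [reduceCtorEq, if_true, if_false]
      omega
  have hcard : ((({0} : Finset ℕ).disjSum (TT.disjSum TT))).card = (Gr (n + 2)).card := by
    apply Finset.card_nbij (i := Sum.elim (fun _ => List.replicate (n + 2) MStep.F)
      (Sum.elim bld (fun x => sg (bld x))))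
    · rintro (z | (x | x)) hz
      · rw [Finset.mem_coe, mem_Gr]
        simp
      · rw [Sum.elim_inr, Sum.elim_inl]
        exact (hmemb x (by simpa [Finset.inr_mem_disjSum, Finset.inl_mem_disjSum] using hz)).1
      · rw [Sum.elim_inr, Sum.elim_inr]
        have := (hmemb x (by simpa [Finset.inr_mem_disjSum] using hz)).1
        rw [mem_Gr] at this; rw [Finset.mem_coe, mem_Gr]
        refine ⟨by simp [this.1], by simp [this.2]⟩
    · -- injectivity
      have hbldinj : ∀ a ∈ TT, ∀ b ∈ TT, bld a = bld b → a = b := by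
        rintro ⟨⟨j, r⟩, ⟨p, q⟩, P, Q⟩ ha ⟨⟨j', r'⟩, ⟨p', q'⟩, P', Q'⟩ hb he
        rw [hTT, Finset.mem_sigma, Finset.mem_sigma, Finset.mem_product] at ha hb
        obtain ⟨hjr, hpq, hP, hQ⟩ := ha
        obtain ⟨hjr', hpq', hP', hQ'⟩ := hb
        rw [Finset.HasAntidiagonal.mem_antidiagonal] at hjr hpq hjr' hpq'
        rw [mem_Mz] at hP hP'
        rw [mem_Gr] at hQ hQ'
        dsimp only at *
        rw [bld, bld] at he
        dsimp only at he
        obtain ⟨hj, _, hv⟩ := lead_unique j (by simp) (by simp) he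
        obtain ⟨hPP, hQQ⟩ := split_unique hP.2 hP'.2 hv
        subst hPP; subst hQQ; subst hj
        have hp : p = p' := by rw [← hP.1, ← hP'.1]
        have hq : q = q' := by rw [← hQ.1, ← hQ'.1]
        subst hp; subst hq
        have hr : r = r' := by omega
        subst hr
        rfl
      have hUD : ∀ a ∈ TT, ∀ b ∈ TT, bld a = sg (bld b) → False := by
        rintro ⟨⟨j, r⟩, ⟨p, q⟩, P, Q⟩ ha ⟨⟨j', r'⟩, ⟨p', q'⟩, P', Q'⟩ hb he
        rw [sg_bld] at he
        rw [bld] at he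
        dsimp only at he
        obtain ⟨_, hud, _⟩ := lead_unique j (by simp) (by simp) he
        exact absurd hud (by simp)
      have hFbld : ∀ a ∈ TT, List.replicate (n + 2) MStep.F = bld a → False := by
        rintro ⟨⟨j, r⟩, ⟨p, q⟩, P, Q⟩ ha he
        have hmem : MStep.U ∈ List.replicate (n + 2) MStep.F := by
          rw [he, bld]
          exact List.mem_append_right _ (List.mem_cons_self)
        exact absurd (List.eq_of_mem_replicate hmem) (by simp)
      have hFsg : ∀ a ∈ TT, List.replicate (n + 2) MStep.F = sg (bld a) → False := by
        rintro ⟨⟨j, r⟩, ⟨p, q⟩, P, Q⟩ ha he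
        have hmem : MStep.D ∈ List.replicate (n + 2) MStep.F := by
          rw [he, sg_bld]
          exact List.mem_append_right _ (List.mem_cons_self)
        exact absurd (List.eq_of_mem_replicate hmem) (by simp)
      rintro (z | (x | x)) h1 (z' | (x' | x')) h2 he <;>
        simp only [Finset.mem_coe, Finset.inl_mem_disjSum, Finset.inr_mem_disjSum,
          Finset.mem_singleton, Sum.elim_inl, Sum.elim_inr] at h1 h2 he
      · rw [h1, h2]
      · exact absurd he (fun hc => hFbld x' h2 hc)
      · exact absurd he (fun hc => hFsg x' h2 hc)
      · exact absurd he.symm (fun hc => hFbld x h1 hc)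
      · rw [hbldinj x h1 x' h2 he]
      · exact absurd he (fun hc => hUD x h1 x' h2 hc)
      · exact absurd he.symm (fun hc => hFsg x h1 hc)
      · exact absurd he.symm (fun hc => hUD x' h2 x h1 hc)
      · have : bld x = bld x' := by
          have := congrArg sg he
          rwa [sg_sg, sg_sg] at this
        rw [hbldinj x h1 x' h2 this]
    · -- surjectivity
      intro w hw
      rw [Finset.mem_coe, mem_Gr] at hw
      obtain ⟨hlen, hbal⟩ := hw
      rw [Set.mem_image]
      rcases strip w with hall | ⟨j, x, v, hx, hsp⟩
      · refine ⟨Sum.inl 0, by simp, ?_⟩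
        rw [Sum.elim_inl, ← hlen]
        exact (List.eq_replicate_length.mpr hall).symm
      · have hcw : cU w = cU (x :: v) ∧ cD w = cD (x :: v) := by
          rw [hsp]; simp
        have hlenv : j + 1 + v.length = n + 2 := by
          rw [hsp] at hlen; simp at hlen; omega
        cases x with
        | F => exact absurd rfl hx
        | U =>
          have hb : cD v = cU v + 1 := by
            obtain ⟨e1, e2⟩ := hcw
            simp at e1 e2
            omega
          obtain ⟨P, Q, hvPQ, hPm, hQb, _⟩ := split_lemma v hb
          refine ⟨Sum.inr (Sum.inl ⟨(j, P.length + Q.length), (P.length, Q.length),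
            (P, Q)⟩), ?_, ?_⟩
          · rw [Finset.mem_coe, Finset.inr_mem_disjSum, Finset.inl_mem_disjSum, hTT,
              Finset.mem_sigma, Finset.mem_sigma, Finset.mem_product]
            have hvl : v.length = P.length + 1 + Q.length := by
              have hh := congrArg List.length hvPQ
              simp at hh
              omega
            refine ⟨?_, ?_, ?_, ?_⟩
            · rw [Finset.HasAntidiagonal.mem_antidiagonal]; dsimp only; omega
            · rw [Finset.HasAntidiagonal.mem_antidiagonal]
            · rw [mem_Mz]; exact ⟨rfl, hPm⟩
            · rw [mem_Gr]; exact ⟨rfl, hQb⟩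
          · rw [Sum.elim_inr, Sum.elim_inl, bld]
            dsimp only
            rw [hsp, hvPQ]
        | D =>
          have hsg : sg w = List.replicate j MStep.F ++ MStep.U :: sg v := by
            rw [hsp, sg, List.map_append, List.map_replicate, List.map_cons]
            rfl
          have hb : cD (sg v) = cU (sg v) + 1 := by
            obtain ⟨e1, e2⟩ := hcw
            simp at e1 e2
            rw [cU_sg, cD_sg]
            omega
          obtain ⟨P, Q, hvPQ, hPm, hQb, _⟩ := split_lemma (sg v) hb
          refine ⟨Sum.inr (Sum.inr ⟨(j, P.length + Q.length), (P.length, Q.length),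
            (P, Q)⟩), ?_, ?_⟩
          · rw [Finset.mem_coe, Finset.inr_mem_disjSum, Finset.inr_mem_disjSum, hTT,
              Finset.mem_sigma, Finset.mem_sigma, Finset.mem_product]
            have hvl : v.length = P.length + 1 + Q.length := by
              have hh := congrArg List.length hvPQ
              simp at hh
              omega
            refine ⟨?_, ?_, ?_, ?_⟩
            · rw [Finset.HasAntidiagonal.mem_antidiagonal]; dsimp only; omega
            · rw [Finset.HasAntidiagonal.mem_antidiagonal]
            · rw [mem_Mz]; exact ⟨rfl, hPm⟩
            · rw [mem_Gr]; exact ⟨rfl, hQb⟩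
          · rw [Sum.elim_inr, Sum.elim_inr]
            have hbe : bld ⟨(j, P.length + Q.length), (P.length, Q.length), (P, Q)⟩
                = sg w := by
              rw [bld]
              dsimp only
              rw [hsg, hvPQ]
            rw [hbe, sg_sg]
  rw [t, ← hcard, Finset.card_disjSum, Finset.card_disjSum, Finset.card_singleton]
  have hTTcard : TT.card = ∑ r ∈ Finset.range (n + 1), c r := by
    rw [hTT, Finset.card_sigma]
    have h1 : ∀ jr ∈ antidiagonal n,
        ((antidiagonal jr.2).sigma (fun pq => Mz pq.1 ×ˢ Gr pq.2)).card = c jr.2 := by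
      intro jr _
      rw [Finset.card_sigma, c]
      refine Finset.sum_congr rfl fun pq _ => ?_
      rw [Finset.card_product]
      rfl
    rw [Finset.sum_congr rfl h1, Finset.Nat.sum_antidiagonal_eq_sum_range_succ_mk]
    exact Finset.sum_range_reflect c (n + 1)
  rw [hTTcard]
  ring

lemma count_ofFn : ∀ {n : ℕ} (f : Fin n → MStep) (x : MStep),
    (List.ofFn f).count x = (Finset.univ.filter (fun i => f i = x)).card := by
  intro n
  induction n with
  | zero => intro f x; simp
  | succ k ih =>
    intro f x
    rw [List.ofFn_succ, List.count_cons, ih (fun i => f i.succ) x,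
      Finset.card_filter, Finset.card_filter, Fin.sum_univ_succ]
    simp only [beq_iff_eq]
    omega

lemma ite_val {n : ℕ} (S T : Finset (Fin n)) (hT : T ⊆ Sᶜ) (i : Fin n) :
    ((if i ∈ S then MStep.U else if i ∈ T then MStep.D else MStep.F) = MStep.U ↔ i ∈ S)
    ∧ ((if i ∈ S then MStep.U else if i ∈ T then MStep.D else MStep.F) = MStep.D ↔ i ∈ T) := by
  by_cases h1 : i ∈ S
  · have h2 : i ∉ T := fun hc => by simpa [h1] using hT hc
    simp [h1, h2]
  · by_cases h2 : i ∈ T <;> simp [h1, h2]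

lemma card_GrJ (n j : ℕ) :
    ((LF n).filter (fun w => cU w = j ∧ cD w = j)).card
      = n.choose j * (n - j).choose j := by
  classical
  have hcard : (((Finset.univ : Finset (Fin n)).powersetCard j).sigma
      (fun S => Sᶜ.powersetCard j)).card
      = ((LF n).filter (fun w => cU w = j ∧ cD w = j)).card := by
    apply Finset.card_nbij (i := fun x => List.ofFn
      (fun i => if i ∈ x.1 then MStep.U else if i ∈ x.2 then MStep.D else MStep.F))
    · rintro ⟨S, T⟩ hmem
      rw [Finset.mem_coe, Finset.mem_sigma, Finset.mem_powersetCard, Finset.mem_powersetCard] at hmem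
      obtain ⟨⟨_, hS⟩, hTsub, hT⟩ := hmem
      dsimp only at hTsub hT ⊢
      rw [Finset.mem_coe, Finset.mem_filter, mem_LF]
      refine ⟨by simp, ?_, ?_⟩
      · rw [cU, count_ofFn, ← hS]
        congr 1
        ext i
        simp only [Finset.mem_filter, Finset.mem_univ, true_and]
        exact (ite_val S T hTsub i).1
      · rw [cD, count_ofFn, ← hT]
        congr 1
        ext i
        simp only [Finset.mem_filter, Finset.mem_univ, true_and]
        exact (ite_val S T hTsub i).2
    · rintro ⟨S, T⟩ h1 ⟨S', T'⟩ h2 he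
      simp only [Finset.mem_coe, Finset.mem_sigma, Finset.mem_powersetCard] at h1 h2
      obtain ⟨_, hT1, _⟩ := h1
      obtain ⟨_, hT2, _⟩ := h2
      dsimp only at he hT1 hT2
      rw [List.ofFn_inj] at he
      have hfun := fun i => congrFun he i
      have hS : S = S' := by
        ext i
        rw [← (ite_val S T hT1 i).1, ← (ite_val S' T' hT2 i).1, hfun i]
      have hT : T = T' := by
        ext i
        rw [← (ite_val S T hT1 i).2, ← (ite_val S' T' hT2 i).2, hfun i]
      subst hS; subst hT; rfl
    · intro w hw
      rw [Finset.mem_coe, Finset.mem_filter, mem_LF] at hw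
      obtain ⟨hlen, hcu, hcd⟩ := hw
      subst hlen
      rw [Set.mem_image]
      set S : Finset (Fin w.length) := Finset.univ.filter (fun i => w[(i : ℕ)] = MStep.U)
        with hSdef
      set T : Finset (Fin w.length) := Finset.univ.filter (fun i => w[(i : ℕ)] = MStep.D)
        with hTdef
      have hTsub : T ⊆ Sᶜ := by
        intro i hi
        rw [hTdef, Finset.mem_filter] at hi
        rw [Finset.mem_compl, hSdef, Finset.mem_filter]
        rintro ⟨_, hc⟩
        rw [hc] at hi
        exact absurd hi.2 (by simp)
      have hwo : List.ofFn (fun i : Fin w.length => w[(i : ℕ)]) = w := List.ofFn_getElem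
      have hcardS : S.card = j := by
        rw [← hcu, cU]
        conv_rhs => rw [← hwo]
        rw [count_ofFn]
      have hcardT : T.card = j := by
        rw [← hcd, cD]
        conv_rhs => rw [← hwo]
        rw [count_ofFn]
      refine ⟨⟨S, T⟩, ?_, ?_⟩
      · rw [Finset.mem_coe, Finset.mem_sigma, Finset.mem_powersetCard, Finset.mem_powersetCard]
        exact ⟨⟨Finset.subset_univ S, hcardS⟩, hTsub, hcardT⟩
      · dsimp only
        apply List.ext_getElem (by simp)
        intro i h1 h2
        rw [List.getElem_ofFn]
        cases hx : w[i] with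
        | U =>
          have : (⟨i, h2⟩ : Fin w.length) ∈ S := by
            rw [hSdef, Finset.mem_filter]; exact ⟨Finset.mem_univ _, hx⟩
          simp [this]
        | D =>
          have hiT : (⟨i, h2⟩ : Fin w.length) ∈ T := by
            rw [hTdef, Finset.mem_filter]; exact ⟨Finset.mem_univ _, hx⟩
          have hiS : (⟨i, h2⟩ : Fin w.length) ∉ S := fun hc => by
            simpa [hc] using hTsub hiT
          simp [hiS, hiT]
        | F =>
          have hiS : (⟨i, h2⟩ : Fin w.length) ∉ S := by
            rw [hSdef, Finset.mem_filter, hx]; simp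
          have hiT : (⟨i, h2⟩ : Fin w.length) ∉ T := by
            rw [hTdef, Finset.mem_filter, hx]; simp
          simp [hiS, hiT]
  rw [← hcard, Finset.card_sigma]
  have hstep : ∀ S ∈ (Finset.univ : Finset (Fin n)).powersetCard j,
      (Sᶜ.powersetCard j).card = (n - j).choose j := by
    intro S hS
    rw [Finset.mem_powersetCard] at hS
    rw [Finset.card_powersetCard, Finset.card_compl, hS.2, Fintype.card_fin]
  rw [Finset.sum_congr rfl hstep, Finset.sum_const, Finset.card_powersetCard,
    Finset.card_univ, Fintype.card_fin, smul_eq_mul]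

-- (L5)
lemma t_eq_sum_choose (n : ℕ) :
    t n = ∑ j ∈ Finset.range (n + 1), n.choose j * (n - j).choose j := by
  classical
  rw [t, Finset.card_eq_sum_card_fiberwise (f := cU) (t := Finset.range (n + 1))
    (fun w hw => by
      rw [Finset.mem_coe, mem_Gr] at hw
      rw [Finset.mem_coe, Finset.mem_range]
      have : cU w ≤ w.length := List.count_le_length
      omega)]
  refine Finset.sum_congr rfl fun j _ => ?_
  rw [← card_GrJ n j]
  congr 1
  ext w
  simp only [Finset.mem_filter, mem_Gr, mem_LF]
  constructor
  · rintro ⟨⟨h1, h2⟩, h3⟩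
    exact ⟨h1, h3, by omega⟩
  · rintro ⟨h1, h2, h3⟩
    exact ⟨⟨h1, by omega⟩, h2⟩

lemma t_step (q : ℕ) : t (q + 2) = t (q + 1) + 2 * c q := by
  rcases q with _ | q
  · rw [t_rec, t_one]; simp
  · rw [t_rec, t_rec, Finset.sum_range_succ]; ring

-- the key identity G
lemma key (l : ℕ) : c l = (l + 1) * m l := by
  induction l using Nat.strong_induction_on with
  | _ l ih =>
  match l with
  | 0 => simp [c, m_zero, t_zero]
  | 1 =>
    have had : antidiagonal 1 = {(0,1),(1,0)} := by decide
    rw [c, had, Finset.sum_pair (by decide)]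
    simp [m_zero, m_one, t_zero, t_one]
  | (N + 2) =>
    have e1 : c (N+2) = m (N+2) * t 0 + m (N+1) * t 1 +
        ∑ pq ∈ antidiagonal N, m pq.1 * t (pq.2 + 2) := by
      rw [c, sum_antidiagonal_succ', sum_antidiagonal_succ']
      ring
    have e2 : ∑ pq ∈ antidiagonal N, m pq.1 * t (pq.2 + 2)
        = (∑ pq ∈ antidiagonal N, m pq.1 * t (pq.2 + 1))
          + 2 * ∑ pq ∈ antidiagonal N, m pq.1 * c pq.2 := by
      rw [Finset.mul_sum, ← Finset.sum_add_distrib]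
      refine Finset.sum_congr rfl fun pq _ => ?_
      rw [t_step]
      ring
    have e3 : (∑ pq ∈ antidiagonal N, m pq.1 * t (pq.2 + 1)) + m (N+1) * t 0 = c (N+1) := by
      rw [c, sum_antidiagonal_succ']
      ring
    have e4 : ∑ pq ∈ antidiagonal N, m pq.1 * c pq.2
        = ∑ pq ∈ antidiagonal N, m pq.1 * ((pq.2 + 1) * m pq.2) := by
      refine Finset.sum_congr rfl fun pq hpq => ?_
      rw [Finset.HasAntidiagonal.mem_antidiagonal] at hpq
      rw [ih pq.2 (by omega)]
    have e5 : 2 * ∑ pq ∈ antidiagonal N, m pq.1 * ((pq.2 + 1) * m pq.2)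
        = (N + 2) * ∑ pq ∈ antidiagonal N, m pq.1 * m pq.2 := by
      have hsw := Finset.Nat.sum_antidiagonal_swap
        (n := N) (f := fun pq => m pq.1 * ((pq.2 + 1) * m pq.2))
      simp only [Prod.fst_swap, Prod.snd_swap] at hsw
      calc 2 * ∑ pq ∈ antidiagonal N, m pq.1 * ((pq.2 + 1) * m pq.2)
          = (∑ pq ∈ antidiagonal N, m pq.1 * ((pq.2 + 1) * m pq.2))
            + ∑ pq ∈ antidiagonal N, m pq.2 * ((pq.1 + 1) * m pq.1) := by
            rw [hsw]; ring
        _ = ∑ pq ∈ antidiagonal N,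
              (m pq.1 * ((pq.2 + 1) * m pq.2) + m pq.2 * ((pq.1 + 1) * m pq.1)) := by
            rw [← Finset.sum_add_distrib]
        _ = ∑ pq ∈ antidiagonal N, (N + 2) * (m pq.1 * m pq.2) := by
            refine Finset.sum_congr rfl fun pq hpq => ?_
            rw [Finset.HasAntidiagonal.mem_antidiagonal] at hpq
            rw [← hpq]
            ring
        _ = (N + 2) * ∑ pq ∈ antidiagonal N, m pq.1 * m pq.2 := by
            rw [Finset.mul_sum]
    have f1 : c (N+1) = (N + 2) * m (N+1) := ih (N+1) (by omega)
    have f3 : m (N+2) = m (N+1) + ∑ pq ∈ antidiagonal N, m pq.1 * m pq.2 := m_rec N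
    calc c (N+2) = m (N+2) + m (N+1) + ((∑ pq ∈ antidiagonal N, m pq.1 * t (pq.2 + 1))
            + 2 * ∑ pq ∈ antidiagonal N, m pq.1 * c pq.2) := by
          rw [e1, e2, t_zero, t_one]; ring
      _ = m (N+2) + c (N+1) + 2 * ∑ pq ∈ antidiagonal N, m pq.1 * c pq.2 := by
          rw [← e3, t_zero]; ring
      _ = m (N+2) + (N + 2) * m (N+1)
            + (N + 2) * ∑ pq ∈ antidiagonal N, m pq.1 * m pq.2 := by
          rw [f1, e4, e5]
      _ = (N + 2 + 1) * m (N+2) := by rw [f3]; ring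

lemma two_h_add_one (n : ℕ) : 2 * h n + 1 = t n := by
  rcases n with _ | _ | n
  · rw [h_zero, t_zero]
  · rw [h_one, t_one]
  · rw [h_rec, t_rec]
    have : ∀ l ∈ Finset.range (n + 1), (l + 1) * m l = c l := fun l _ => (key l).symm
    rw [Finset.sum_congr rfl this]; ring

-- (L6)
lemma card_eq_h (n : ℕ) :
    Nat.card {p : List MStep × ℕ //
        p.1.length = n ∧ IsMotzkin p.1 ∧ IsHumpAt p.1 p.2} = h n := by
  have e : ∀ p : List MStep × ℕ,
      (p.1.length = n ∧ IsMotzkin p.1 ∧ IsHumpAt p.1 p.2) ↔ p ∈ HP n := by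
    intro p
    simp only [HP, Finset.mem_filter, Finset.mem_product, mem_LF, Finset.mem_range]
    constructor
    · rintro ⟨h1, h2, h3⟩
      have := isHumpAt_lt h3
      exact ⟨⟨h1, by omega⟩, h2, h3⟩
    · rintro ⟨⟨h1, _⟩, h2, h3⟩
      exact ⟨h1, h2, h3⟩
  rw [h, Nat.card_congr (Equiv.subtypeEquivRight e), Nat.card_eq_fintype_card,
    Fintype.card_coe]

end

end TotalHumps

theorem total_humps_motzkin (n : ℕ) :
    (Nat.card {p : List MStep × ℕ //
        p.1.length = n ∧ IsMotzkin p.1 ∧ IsHumpAt p.1 p.2} : ℚ) =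
      (1 / 2) *
        ((∑ j ∈ Finset.range (n + 1), (n.choose j * (n - j).choose j : ℚ)) - 1) := by
  rw [TotalHumps.card_eq_h]
  have h1 := TotalHumps.two_h_add_one n
  have h2 := TotalHumps.t_eq_sum_choose n
  have : (∑ j ∈ Finset.range (n + 1), (n.choose j * (n - j).choose j : ℚ))
      = ((TotalHumps.t n : ℕ) : ℚ) := by
    rw [h2]; push_cast; ring
  rw [this, ← h1]
  push_cast
  ring
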